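/- For every integer n ≥ 1, φ(D^{n}(y·w)) = (n+1)^{n} (a constant polynomial in ℚ[X]). -/

import Mathlib

open Polynomial Finset

namespace PhiAux

noncomputable def Bs (c : ℚ) : ℕ → Polynomial ℚ
  | 0 => 1
  | (k+1) => (X + C c) * (X + C (c + (k+1 : ℕ)))^k

@[simp] lemma Bs_zero (c : ℚ) : Bs c 0 = 1 := rfl

lemma Bs_succ (c : ℚ) (k : ℕ) : Bs c (k+1) = (X + C c) * (X + C (c + (k+1 : ℕ)))^k := rfl

lemma deriv_Bs (c : ℚ) (k : ℕ) :
    derivative (Bs c (k+1)) = ((k:ℚ)+1) • Bs (c+1) k := by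
  cases k with
  | zero => simp [Bs]
  | succ j =>
      rw [Bs_succ, Bs_succ]
      have hb : c + 1 + ((j+1:ℕ):ℚ) = c + ((j+1+1:ℕ):ℚ) := by push_cast; ring
      rw [hb]
      rw [derivative_mul, derivative_pow]
      simp only [derivative_add, derivative_X, derivative_C, add_zero, zero_add, mul_one, one_mul]
      rw [smul_eq_C_mul]
      have hpow : (X + C (c + ((j+1+1:ℕ):ℚ)))^(j+1)
          = (X + C (c + ((j+1+1:ℕ):ℚ)))^j * (X + C (c + ((j+1+1:ℕ):ℚ))) := pow_succ _ _
      rw [hpow]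
      simp only [map_add, map_natCast, map_one]
      push_cast
      ring

lemma poly_eq_of_deriv (p q : Polynomial ℚ) (a : ℚ)
    (h1 : derivative p = derivative q) (h2 : p.eval a = q.eval a) : p = q := by
  have h : derivative (p - q) = 0 := by rw [map_sub, h1, sub_self]
  have hC := Polynomial.eq_C_of_derivative_eq_zero h
  have h3 : (p - q).eval a = 0 := by simp [h2]
  rw [hC] at h3
  simp only [eval_C] at h3
  have h4 : p - q = 0 := by rw [hC, h3, map_zero]
  exact sub_eq_zero.mp h4

lemma eval_Bs_self (c : ℚ) (k : ℕ) : (Bs c (k+1)).eval (-c) = 0 := by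
  simp [Bs_succ]

lemma M2 : ∀ (n : ℕ) (c z : ℚ),
    ∑ k ∈ range (n+1), (n.choose k : ℚ) • (Bs c k * C ((z + ((n-k : ℕ):ℚ))^(n-k)))
      = (X + C (c + z + (n:ℚ)))^n := by
  intro n
  induction n with
  | zero => intro c z; simp
  | succ n IH =>
    intro c z
    apply poly_eq_of_deriv _ _ (-c)
    · rw [derivative_sum]
      have hterm : ∀ k ∈ range (n+2),
          derivative ((((n+1).choose k : ℚ)) • (Bs c k * C ((z + ((n+1-k : ℕ):ℚ))^(n+1-k))))
          = (((n+1).choose k : ℚ)) • (derivative (Bs c k) * C ((z + ((n+1-k : ℕ):ℚ))^(n+1-k))) := by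
        intro k _
        rw [derivative_smul, derivative_mul, derivative_C, mul_zero, add_zero]
      rw [Finset.sum_congr rfl hterm]
      rw [Finset.sum_range_succ']
      simp only [Bs_zero, derivative_one, zero_mul, smul_zero, add_zero]
      have hterm2 : ∀ k ∈ range (n+1),
          (((n+1).choose (k+1) : ℚ)) • (derivative (Bs c (k+1)) * C ((z + ((n+1-(k+1) : ℕ):ℚ))^(n+1-(k+1))))
          = ((n:ℚ)+1) • ((n.choose k : ℚ) • (Bs (c+1) k * C ((z + ((n-k : ℕ):ℚ))^(n-k)))) := by
        intro k _
        rw [deriv_Bs]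
        have hn : n+1-(k+1) = n-k := by omega
        rw [hn, smul_mul_assoc, smul_smul, smul_smul]
        congr 1
        have hsc := Nat.add_one_mul_choose_eq n k
        have hq : ((Nat.succ n * n.choose k : ℕ) : ℚ) = (((n+1).choose (k+1) * (k+1) : ℕ) : ℚ) := by
          rw [hsc]
        push_cast at hq
        push_cast
        linarith
      rw [Finset.sum_congr rfl hterm2, ← Finset.smul_sum, IH (c+1) z]
      rw [derivative_pow]
      simp only [derivative_add, derivative_X, derivative_C, add_zero, mul_one]
      rw [smul_eq_C_mul]
      have h1 : c + 1 + z + (n:ℚ) = c + z + ((n+1 : ℕ):ℚ) := by push_cast; ring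
      rw [h1]
      push_cast
      ring
    · rw [eval_finset_sum]
      rw [Finset.sum_range_succ']
      have hz : ∀ k ∈ range (n+1),
          (((n+1).choose (k+1) : ℚ) • (Bs c (k+1) * C ((z + ((n+1-(k+1) : ℕ):ℚ))^(n+1-(k+1))))).eval (-c) = 0 := by
        intro k _
        rw [eval_smul, eval_mul, eval_Bs_self]
        simp
      rw [Finset.sum_congr rfl hz]
      simp only [Finset.sum_const_zero, zero_add]
      simp [eval_pow]
      ring

noncomputable def bb (z : ℚ) (k : ℕ) : ℚ := (Bs z k).eval 0

@[simp] lemma bb_zero (z : ℚ) : bb z 0 = 1 := by simp [bb]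

lemma bb_succ (z : ℚ) (k : ℕ) : bb z (k+1) = z * (z + ((k+1:ℕ):ℚ))^k := by
  simp [bb, Bs_succ]

lemma M1 : ∀ (n : ℕ) (c z : ℚ),
    ∑ k ∈ range (n+1), (n.choose k : ℚ) • (Bs c k * C (bb z (n-k)))
      = Bs (c + z) n := by
  intro n
  induction n with
  | zero => intro c z; simp
  | succ n IH =>
    intro c z
    apply poly_eq_of_deriv _ _ (-c)
    · rw [derivative_sum]
      have hterm : ∀ k ∈ range (n+2),
          derivative ((((n+1).choose k : ℚ)) • (Bs c k * C (bb z (n+1-k))))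
          = (((n+1).choose k : ℚ)) • (derivative (Bs c k) * C (bb z (n+1-k))) := by
        intro k _
        rw [derivative_smul, derivative_mul, derivative_C, mul_zero, add_zero]
      rw [Finset.sum_congr rfl hterm]
      rw [Finset.sum_range_succ']
      simp only [Bs_zero, derivative_one, zero_mul, smul_zero, add_zero]
      have hterm2 : ∀ k ∈ range (n+1),
          (((n+1).choose (k+1) : ℚ)) • (derivative (Bs c (k+1)) * C (bb z (n+1-(k+1))))
          = ((n:ℚ)+1) • ((n.choose k : ℚ) • (Bs (c+1) k * C (bb z (n-k)))) := by
        intro k _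
        rw [deriv_Bs]
        have hn : n+1-(k+1) = n-k := by omega
        rw [hn, smul_mul_assoc, smul_smul, smul_smul]
        congr 1
        have hsc := Nat.add_one_mul_choose_eq n k
        have hq : ((Nat.succ n * n.choose k : ℕ) : ℚ) = (((n+1).choose (k+1) * (k+1) : ℕ) : ℚ) := by
          rw [hsc]
        push_cast at hq
        linarith
      rw [Finset.sum_congr rfl hterm2, ← Finset.smul_sum, IH (c+1) z]
      rw [deriv_Bs]
      have h1 : c + 1 + z = c + z + 1 := by ring
      rw [h1]
    · rw [eval_finset_sum]
      rw [Finset.sum_range_succ']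
      have hz : ∀ k ∈ range (n+1),
          (((n+1).choose (k+1) : ℚ) • (Bs c (k+1) * C (bb z (n+1-(k+1))))).eval (-c) = 0 := by
        intro k _
        rw [eval_smul, eval_mul, eval_Bs_self]
        simp
      rw [Finset.sum_congr rfl hz]
      simp only [Finset.sum_const_zero, zero_add]
      have hs : n + 1 - 0 = n + 1 := rfl
      rw [hs, bb_succ, Bs_succ]
      simp only [Nat.choose_zero_right, Nat.cast_one, one_smul, Bs_zero, one_mul, eval_smul,
        eval_C, eval_mul, eval_pow, eval_add, eval_X, smul_eq_mul]
      ring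

/-! ### Numeric identities -/

lemma M2_eval (n : ℕ) (c z : ℚ) :
    ∑ k ∈ range (n+1), (n.choose k : ℚ) * (bb c k * (z + ((n-k : ℕ):ℚ))^(n-k))
      = (c + z + (n:ℚ))^n := by
  have h := congrArg (Polynomial.eval 0) (M2 n c z)
  rw [eval_finset_sum] at h
  simp only [eval_smul, eval_mul, eval_C, smul_eq_mul, eval_pow, eval_add, eval_X, zero_add] at h
  exact h

lemma M1_eval (n : ℕ) (c z : ℚ) :
    ∑ k ∈ range (n+1), (n.choose k : ℚ) * (bb c k * bb z (n-k)) = bb (c+z) n := by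
  have h := congrArg (Polynomial.eval 0) (M1 n c z)
  rw [eval_finset_sum] at h
  simp only [eval_smul, eval_mul, eval_C, smul_eq_mul] at h
  exact h

/-- `Tc n = n^(n-1)` (with `Tc 0 = 0`). -/
def Tc : ℕ → ℚ
  | 0 => 0
  | (n+1) => ((n+1 : ℕ):ℚ)^n

/-- `Ac n = n^n` (with `0^0 = 1`). -/
def Ac : ℕ → ℚ := fun n => ((n:ℕ):ℚ)^n

lemma coeff1_Bs0 : ∀ k, (Bs 0 k).coeff 1 = Tc k := by
  intro k
  cases k with
  | zero => simp [Tc, Polynomial.coeff_one]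
  | succ j =>
      rw [Bs_succ]
      simp only [map_zero, zero_add, add_zero]
      rw [Polynomial.coeff_X_mul]
      have : ((X + C ((j+1:ℕ):ℚ))^j).coeff 0 = (((j+1:ℕ):ℚ))^j := by
        rw [Polynomial.coeff_X_add_C_pow]
        simp
      rw [this]; rfl

lemma F1 (n : ℕ) (hn : 1 ≤ n) :
    ∑ k ∈ range (n+1), (n.choose k : ℚ) * (Tc k * Ac (n-k)) = Ac n := by
  have h := congrArg (fun p => Polynomial.coeff p 1) (M2 n 0 0)
  simp only [Polynomial.finset_sum_coeff] at h
  have hterm : ∀ k ∈ range (n+1),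
      ((n.choose k : ℚ) • (Bs 0 k * C ((0 + ((n-k : ℕ):ℚ))^(n-k)))).coeff 1
      = (n.choose k : ℚ) * (Tc k * Ac (n-k)) := by
    intro k _
    rw [Polynomial.coeff_smul, Polynomial.coeff_mul_C, coeff1_Bs0]
    simp only [smul_eq_mul, Ac, zero_add]
  rw [Finset.sum_congr rfl hterm] at h
  rw [h]
  rw [Polynomial.coeff_X_add_C_pow]
  simp only [zero_add, Nat.choose_one_right, Ac]
  rw [← pow_succ]
  congr 1
  omega

/-! ### EGF power series -/

open PowerSeries

abbrev A := Polynomial ℚ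

noncomputable def egf (f : ℕ → A) : PowerSeries A :=
  PowerSeries.mk fun n => ((n.factorial : ℚ))⁻¹ • f n

lemma coeff_egf (f : ℕ → A) (n : ℕ) :
    (PowerSeries.coeff n) (egf f) = ((n.factorial : ℚ))⁻¹ • f n :=
  PowerSeries.coeff_mk _ _

lemma egf_injective (f g : ℕ → A) (h : egf f = egf g) : f = g := by
  funext n
  have := congrArg (PowerSeries.coeff n) h
  rw [coeff_egf, coeff_egf] at this
  have h2 := congrArg (fun x => (n.factorial : ℚ) • x) this
  simp only [smul_smul] at h2
  rw [mul_inv_cancel₀ (by exact_mod_cast Nat.factorial_ne_zero n), one_smul, one_smul] at h2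
  exact h2

lemma egf_mul (f g : ℕ → A) :
    egf f * egf g
      = egf (fun n => ∑ k ∈ range (n+1), (n.choose k : ℚ) • (f k * g (n-k))) := by
  apply PowerSeries.ext
  intro n
  rw [PowerSeries.coeff_mul, coeff_egf, Finset.Nat.sum_antidiagonal_eq_sum_range_succ_mk]
  rw [Finset.smul_sum]
  apply Finset.sum_congr rfl
  intro k hk
  have hkn : k ≤ n := by
    simp only [Finset.mem_range] at hk; omega
  rw [coeff_egf, coeff_egf]
  rw [smul_mul_assoc, mul_smul_comm, smul_smul, smul_smul]
  congr 1
  rw [Nat.cast_choose ℚ hkn]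
  have h1 : (k.factorial : ℚ) ≠ 0 := by exact_mod_cast Nat.factorial_ne_zero k
  have h2 : ((n-k).factorial : ℚ) ≠ 0 := by exact_mod_cast Nat.factorial_ne_zero (n-k)
  have h3 : (n.factorial : ℚ) ≠ 0 := by exact_mod_cast Nat.factorial_ne_zero n
  field_simp

lemma deriv_egf (f : ℕ → A) :
    PowerSeries.derivative A (egf f) = egf (fun n => f (n+1)) := by
  apply PowerSeries.ext
  intro n
  rw [PowerSeries.coeff_derivative, coeff_egf, coeff_egf]
  have hcast : ((n:A) + 1) = algebraMap ℚ A ((n:ℚ)+1) := by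
    push_cast; simp
  rw [hcast, ← Algebra.commutes, ← Algebra.smul_def, smul_smul]
  congr 1
  have h3 : ((n+1).factorial : ℚ) ≠ 0 := by exact_mod_cast Nat.factorial_ne_zero (n+1)
  have h4 : (n.factorial : ℚ) ≠ 0 := by exact_mod_cast Nat.factorial_ne_zero n
  rw [Nat.factorial_succ]
  push_cast
  field_simp

lemma egf_one : (1 : PowerSeries A) = egf (fun n => if n = 0 then 1 else 0) := by
  apply PowerSeries.ext
  intro n
  rw [coeff_egf, PowerSeries.coeff_one]
  cases n with
  | zero => simp
  | succ m => simp

lemma conv_C (f g : ℕ → ℚ) (n : ℕ) :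
    ∑ k ∈ range (n+1), (n.choose k:ℚ) • ((C (f k) : A) * Polynomial.C (g (n-k)))
      = (C (∑ k ∈ range (n+1), (n.choose k:ℚ) * (f k * g (n-k))) : A) := by
  rw [map_sum]
  apply Finset.sum_congr rfl
  intro k _
  rw [Polynomial.smul_eq_C_mul, ← map_mul, ← map_mul]

noncomputable def Ys : PowerSeries A := egf (fun n => C (Ac n))
noncomputable def Ws : PowerSeries A := egf (fun n => C (bb 1 n))
noncomputable def Ts : PowerSeries A := egf (fun n => C (Tc n))
noncomputable def S2s : PowerSeries A := egf (fun n => C (bb 2 n))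
noncomputable def V1s : PowerSeries A := PowerSeries.C Polynomial.X * Ws
noncomputable def V0s : PowerSeries A := egf (fun n => Bs 0 n)

lemma bb_one_eval (n : ℕ) : bb 1 (n+1) = ((n+2 : ℕ):ℚ)^n := by
  rw [bb_succ, one_mul]
  congr 1
  push_cast; ring

lemma L1 : Ws * Ys = PowerSeries.derivative A Ts := by
  rw [Ws, Ys, Ts, egf_mul, deriv_egf]
  apply congrArg egf
  funext n
  rw [conv_C]
  congr 1
  have h := M2_eval n 1 0
  simp only [zero_add] at h
  show ∑ k ∈ range (n+1), (n.choose k:ℚ) * (bb 1 k * (((n-k:ℕ):ℚ))^(n-k)) = Tc (n+1)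
  rw [h, show Tc (n+1) = ((n+1:ℕ):ℚ)^n from rfl]
  push_cast; ring

lemma L2 : Ws * Ws = S2s := by
  rw [Ws, S2s, egf_mul]
  apply congrArg egf
  funext n
  rw [conv_C]
  congr 1
  have h := M1_eval n 1 1
  rw [h]
  norm_num

lemma L3 : S2s * Ys = PowerSeries.derivative A Ws := by
  rw [S2s, Ys, Ws, egf_mul, deriv_egf]
  apply congrArg egf
  funext n
  rw [conv_C]
  congr 1
  have h := M2_eval n 2 0
  simp only [zero_add] at h
  show ∑ k ∈ range (n+1), (n.choose k:ℚ) * (bb 2 k * (((n-k:ℕ):ℚ))^(n-k)) = bb 1 (n+1)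
  rw [h, bb_one_eval]
  push_cast; ring

lemma L4 : (1 - Ts) * Ys = 1 := by
  rw [Ts, Ys, egf_one]
  have hsub : egf (fun n => if n = 0 then (1:A) else 0) - egf (fun n => C (Tc n))
      = egf (fun n => (if n = 0 then (1:A) else 0) - Polynomial.C (Tc n)) := by
    apply PowerSeries.ext
    intro n
    simp only [map_sub, coeff_egf, smul_sub]
  rw [hsub, egf_mul]
  apply congrArg egf
  funext n
  cases n with
  | zero => simp [Tc, Ac]
  | succ m =>
      simp only [if_neg (Nat.succ_ne_zero m)]
      have hterm : ∀ k ∈ range (m+2),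
          ((m+1).choose k : ℚ) • (((if k = 0 then (1:A) else 0) - Polynomial.C (Tc k)) * Polynomial.C (Ac (m+1-k)))
          = (if k = 0 then (((m+1).choose k : ℚ) • ((C (Ac (m+1-k))) : A)) else 0)
            - ((m+1).choose k : ℚ) • ((C (Tc k) : A) * Polynomial.C (Ac (m+1-k))) := by
        intro k _
        by_cases hk : k = 0
        · subst hk; simp [sub_mul, smul_sub, Tc]
        · simp [hk, sub_mul, smul_sub]
      rw [Finset.sum_congr rfl hterm, Finset.sum_sub_distrib]
      rw [Finset.sum_ite_eq' (range (m+2)) 0]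
      rw [if_pos (Finset.mem_range.mpr (by omega : (0:ℕ) < m+2))]
      rw [conv_C]
      rw [F1 (m+1) (by omega)]
      simp [Tc]

lemma my_deriv_mul (F G : PowerSeries A) :
    PowerSeries.derivative A (F*G) = F * PowerSeries.derivative A G + G * PowerSeries.derivative A F := by
  have h := PowerSeries.derivativeFun_mul F G
  rw [smul_eq_mul, smul_eq_mul] at h
  exact h

lemma my_deriv_one : PowerSeries.derivative A (1 : PowerSeries A) = 0 := by
  simp

lemma derivWs : PowerSeries.derivative A Ws = Ys * Ws * Ws := by
  rw [← L3, ← L2]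
  ring

lemma derivYs : PowerSeries.derivative A Ys = Ys * Ys * Ys * Ws := by
  have h0 := congrArg (PowerSeries.derivative A) L4
  rw [my_deriv_mul, my_deriv_one] at h0
  have hsub : PowerSeries.derivative A (1 - Ts) = - PowerSeries.derivative A Ts := by
    rw [map_sub, my_deriv_one, zero_sub]
  rw [hsub] at h0
  have h1 : (1 - Ts) * PowerSeries.derivative A Ys = Ys * PowerSeries.derivative A Ts := by
    linear_combination h0
  calc PowerSeries.derivative A Ys
      = ((1 - Ts) * Ys) * PowerSeries.derivative A Ys := by rw [L4, one_mul]
    _ = Ys * ((1 - Ts) * PowerSeries.derivative A Ys) := by ring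
    _ = Ys * (Ys * PowerSeries.derivative A Ts) := by rw [h1]
    _ = Ys * (Ys * (Ws * Ys)) := by rw [L1]
    _ = Ys * Ys * Ys * Ws := by ring

lemma derivV1s : PowerSeries.derivative A V1s = V1s * Ys * Ws := by
  rw [V1s, my_deriv_mul, PowerSeries.derivative_C, mul_zero, add_zero, derivWs]
  ring

lemma C_mul_egf (p : A) (f : ℕ → A) :
    PowerSeries.C p * egf f = egf (fun n => p * f n) := by
  apply PowerSeries.ext
  intro n
  rw [← PowerSeries.smul_eq_C_mul, PowerSeries.coeff_smul, coeff_egf, coeff_egf,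
    smul_eq_mul, mul_smul_comm]

lemma derivV0s : PowerSeries.derivative A V0s = V0s * V1s * Ys := by
  have hr : V0s * V1s * Ys = PowerSeries.C Polynomial.X * (V0s * (Ws * Ys)) := by
    rw [V1s]; ring
  rw [hr, L1]
  have hTs : PowerSeries.derivative A Ts = egf (fun n => C (Tc (n+1))) := by
    rw [Ts, deriv_egf]
  rw [hTs, V0s, egf_mul, C_mul_egf, deriv_egf]
  apply congrArg egf
  funext n
  have h := M2 n 0 1
  have hterm : ∀ k ∈ range (n+1),
      (n.choose k : ℚ) • (Bs 0 k * Polynomial.C (Tc (n-k+1)))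
      = (n.choose k : ℚ) • (Bs 0 k * Polynomial.C ((1 + ((n-k : ℕ):ℚ))^(n-k))) := by
    intro k _
    congr 2
    rw [show Tc (n-k+1) = ((n-k+1:ℕ):ℚ)^(n-k) from rfl]
    congr 1
    push_cast; ring
  rw [Finset.sum_congr rfl hterm, h]
  rw [show Bs 0 (n+1) = (Polynomial.X + Polynomial.C (0:ℚ)) * (Polynomial.X + Polynomial.C (0 + ((n+1:ℕ):ℚ)))^n from rfl]
  simp only [map_zero, add_zero, zero_add]
  congr 3
  push_cast; ring

/-! ### Chain rule -/

noncomputable def v : Fin 4 → PowerSeries A := ![V0s, V1s, Ys, Ws]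

noncomputable def psi : MvPolynomial (Fin 4) ℚ →ₐ[ℚ] PowerSeries A := MvPolynomial.aeval v

lemma psi_X0 : psi (MvPolynomial.X 0) = V0s := by simp [psi, v]
lemma psi_X1 : psi (MvPolynomial.X 1) = V1s := by simp [psi, v]
lemma psi_X2 : psi (MvPolynomial.X 2) = Ys := by simp [psi, v]
lemma psi_X3 : psi (MvPolynomial.X 3) = Ws := by simp [psi, v]

section Chain

variable (D : Derivation ℚ (MvPolynomial (Fin 4) ℚ) (MvPolynomial (Fin 4) ℚ))
variable (hDa : D (MvPolynomial.X 0) = MvPolynomial.X 0 * MvPolynomial.X 1 * MvPolynomial.X 2)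
variable (hDx : D (MvPolynomial.X 1) = MvPolynomial.X 1 * MvPolynomial.X 2 * MvPolynomial.X 3)
variable (hDy : D (MvPolynomial.X 2) = (MvPolynomial.X 2) ^ 3 * MvPolynomial.X 3)
variable (hDw : D (MvPolynomial.X 3) = MvPolynomial.X 2 * (MvPolynomial.X 3) ^ 2)

include hDa hDx hDy hDw

lemma chain_gen : ∀ i : Fin 4, psi (D (MvPolynomial.X i)) = PowerSeries.derivative A (psi (MvPolynomial.X i)) := by
  intro i
  fin_cases i
  · show psi (D (MvPolynomial.X 0)) = PowerSeries.derivative A (psi (MvPolynomial.X 0))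
    rw [hDa, map_mul, map_mul, psi_X0, psi_X1, psi_X2, derivV0s]
  · show psi (D (MvPolynomial.X 1)) = PowerSeries.derivative A (psi (MvPolynomial.X 1))
    rw [hDx, map_mul, map_mul, psi_X1, psi_X2, psi_X3, derivV1s]
  · show psi (D (MvPolynomial.X 2)) = PowerSeries.derivative A (psi (MvPolynomial.X 2))
    rw [hDy, map_mul, map_pow, psi_X2, psi_X3, derivYs]; ring
  · show psi (D (MvPolynomial.X 3)) = PowerSeries.derivative A (psi (MvPolynomial.X 3))
    rw [hDw, map_mul, map_pow, psi_X2, psi_X3, derivWs]; ring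

lemma chain : ∀ p, psi (D p) = PowerSeries.derivative A (psi p) := by
  intro p
  induction p using MvPolynomial.induction_on with
  | C a =>
      rw [show (MvPolynomial.C a : MvPolynomial (Fin 4) ℚ) = algebraMap ℚ _ a from rfl,
        Derivation.map_algebraMap, map_zero, AlgHom.commutes]
      rw [PowerSeries.algebraMap_apply, PowerSeries.derivative_C]
  | add p q hp hq =>
      rw [map_add, map_add, hp, hq, map_add]
      exact (map_add (PowerSeries.derivative A) (psi p) (psi q)).symm
  | mul_X p i hp =>
      rw [Derivation.leibniz, smul_eq_mul, smul_eq_mul, map_add, map_mul, map_mul, hp,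
        map_mul, my_deriv_mul, chain_gen D hDa hDx hDy hDw i]

lemma chain_iter : ∀ (m : ℕ) (p : MvPolynomial (Fin 4) ℚ),
    psi ((⇑D)^[m] p) = (fun G => PowerSeries.derivative A G)^[m] (psi p) := by
  intro m
  induction m with
  | zero => intro p; simp
  | succ m IH =>
      intro p
      rw [Function.iterate_succ_apply, Function.iterate_succ_apply, IH,
        chain D hDa hDx hDy hDw p]

end Chain

lemma coeff_iter : ∀ (m : ℕ) (F : PowerSeries A),
    PowerSeries.coeff 0 ((fun G => PowerSeries.derivative A G)^[m] F)
      = (m.factorial : ℚ) • PowerSeries.coeff m F := by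
  intro m
  induction m with
  | zero => intro F; simp
  | succ m IH =>
      intro F
      rw [Function.iterate_succ_apply, IH, PowerSeries.coeff_derivative]
      have hcast : ((m:A) + 1) = algebraMap ℚ A ((m:ℚ)+1) := by push_cast; simp
      rw [hcast, ← Algebra.commutes, ← Algebra.smul_def, smul_smul]
      congr 1
      rw [Nat.factorial_succ]
      push_cast
      ring

lemma cc_egf (f : ℕ → A) : PowerSeries.constantCoeff (egf f) = f 0 := by
  rw [← PowerSeries.coeff_zero_eq_constantCoeff_apply, coeff_egf]
  simp

lemma phi_eq (φ : MvPolynomial (Fin 4) ℚ →ₐ[ℚ] Polynomial ℚ)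
    (hφa : φ (MvPolynomial.X 0) = 1) (hφx : φ (MvPolynomial.X 1) = Polynomial.X)
    (hφy : φ (MvPolynomial.X 2) = 1) (hφw : φ (MvPolynomial.X 3) = 1) :
    ∀ p, φ p = PowerSeries.constantCoeff (psi p) := by
  have h : (φ : MvPolynomial (Fin 4) ℚ →+* Polynomial ℚ)
      = (PowerSeries.constantCoeff (R := A)).comp (psi : MvPolynomial (Fin 4) ℚ →+* PowerSeries A) := by
    apply MvPolynomial.ringHom_ext
    · intro a
      simp only [RingHom.coe_comp, Function.comp_apply, AlgHom.coe_toRingHom]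
      rw [show (MvPolynomial.C a : MvPolynomial (Fin 4) ℚ) = algebraMap ℚ _ a from rfl,
        AlgHom.commutes, AlgHom.commutes, PowerSeries.algebraMap_apply,
        PowerSeries.constantCoeff_C]
    · intro i
      simp only [RingHom.coe_comp, Function.comp_apply, AlgHom.coe_toRingHom]
      fin_cases i
      · show φ (MvPolynomial.X 0) = PowerSeries.constantCoeff (psi (MvPolynomial.X 0))
        rw [hφa, psi_X0, V0s, cc_egf]; rfl
      · show φ (MvPolynomial.X 1) = PowerSeries.constantCoeff (psi (MvPolynomial.X 1))
        rw [hφx, psi_X1, V1s, map_mul, PowerSeries.constantCoeff_C, Ws, cc_egf]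
        simp
      · show φ (MvPolynomial.X 2) = PowerSeries.constantCoeff (psi (MvPolynomial.X 2))
        rw [hφy, psi_X2, Ys, cc_egf]
        simp [Ac]
      · show φ (MvPolynomial.X 3) = PowerSeries.constantCoeff (psi (MvPolynomial.X 3))
        rw [hφw, psi_X3, Ws, cc_egf]
        simp [bb, Bs]
  intro p
  exact DFunLike.congr_fun h p

end PhiAux

open MvPolynomial in
theorem phi_dn_yw (D : Derivation ℚ (MvPolynomial (Fin 4) ℚ) (MvPolynomial (Fin 4) ℚ))
    (hDa : D (X 0) = X 0 * X 1 * X 2)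
    (hDx : D (X 1) = X 1 * X 2 * X 3)
    (hDy : D (X 2) = (X 2) ^ 3 * X 3)
    (hDw : D (X 3) = X 2 * (X 3) ^ 2)
    (φ : MvPolynomial (Fin 4) ℚ →ₐ[ℚ] Polynomial ℚ)
    (hφa : φ (X 0) = 1) (hφx : φ (X 1) = Polynomial.X)
    (hφy : φ (X 2) = 1) (hφw : φ (X 3) = 1)
    (n : ℕ) (hn : 1 ≤ n) :
    φ ((⇑D)^[n] (X 2 * X 3)) = ((n : Polynomial ℚ) + 1) ^ n := by
  rw [PhiAux.phi_eq φ hφa hφx hφy hφw, PhiAux.chain_iter D hDa hDx hDy hDw n,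
    ← PowerSeries.coeff_zero_eq_constantCoeff_apply, PhiAux.coeff_iter]
  have hval : PhiAux.psi (X 2 * X 3)
      = PowerSeries.derivative PhiAux.A PhiAux.Ts := by
    rw [map_mul, PhiAux.psi_X2, PhiAux.psi_X3, ← PhiAux.L1]
    ring
  rw [hval, PhiAux.Ts, PhiAux.deriv_egf, PhiAux.coeff_egf, smul_smul,
    mul_inv_cancel₀ (by exact_mod_cast Nat.factorial_ne_zero n), one_smul]
  rw [show PhiAux.Tc (n+1) = ((n+1:ℕ):ℚ)^n from rfl]
  rw [map_pow, Polynomial.C_eq_natCast]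
  push_cast
  ring
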